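/- arXiv:0905.3281 — 5 statements merged into one kernel-verified Lean document; each statement's English description precedes it below -/
import Mathlib

section
/- Let G be a finite simple graph of order n ≥ 1 and let l = min { j : d(G,j) = C(n,j) } (this minimum exists since the full vertex set is dominating). Then the minimum degree of G equals n − l, i.e., δ(G) = n − l. -/
/-- `S` is a dominating set of `G`: every vertex not in `S` is adjacent to some vertex of `S`. -/
def IsDomSet {V : Type*} (G : SimpleGraph V) (S : Finset V) : Prop :=
  ∀ v : V, v ∉ S → ∃ u ∈ S, G.Adj u v

/-- `d(G,i)`: the number of dominating sets of `G` of cardinality `i`. -/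
noncomputable def domCount {V : Type*} (G : SimpleGraph V) (i : ℕ) : ℕ :=
  {S : Finset V | IsDomSet G S ∧ S.card = i}.ncard

/-- `d_v(G,i)`: the number of dominating sets of `G` of cardinality `i` containing `v`. -/
noncomputable def domCountVert {V : Type*} (G : SimpleGraph V) (v : V) (i : ℕ) : ℕ :=
  {S : Finset V | IsDomSet G S ∧ S.card = i ∧ v ∈ S}.ncard

open Finset in
lemma domCount_eq_choose_iff {V : Type*} [Fintype V] (G : SimpleGraph V) (j : ℕ) :
    domCount G j = (Fintype.card V).choose j ↔
      ∀ S : Finset V, S.card = j → IsDomSet G S := by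
  classical
  have hbig : {S : Finset V | S.card = j} = ((Finset.powersetCard j (Finset.univ : Finset V) : Finset (Finset V)) : Set (Finset V)) := by
    ext S; simp
  have hbigcard : {S : Finset V | S.card = j}.ncard = (Fintype.card V).choose j := by
    rw [hbig, Set.ncard_coe_finset, Finset.card_powersetCard, Finset.card_univ]
  have hsub : {S : Finset V | IsDomSet G S ∧ S.card = j} ⊆ {S : Finset V | S.card = j} := by
    intro S hS; exact hS.2
  have hfin : {S : Finset V | S.card = j}.Finite := Set.toFinite _
  constructor
  · intro h S hSj
    have heq : {S : Finset V | IsDomSet G S ∧ S.card = j} = {S : Finset V | S.card = j} :=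
      Set.eq_of_subset_of_ncard_le hsub (by rw [hbigcard, ← h]; rfl) hfin
    have : S ∈ {S : Finset V | IsDomSet G S ∧ S.card = j} := by rw [heq]; exact hSj
    exact this.1
  · intro h
    have heq : {S : Finset V | IsDomSet G S ∧ S.card = j} = {S : Finset V | S.card = j} := by
      apply Set.Subset.antisymm hsub
      intro S hS
      exact ⟨h S hS, hS⟩
    rw [domCount, heq, hbigcard]

open Finset in
lemma all_dom_iff {V : Type*} [Fintype V] [Nonempty V] (G : SimpleGraph V)
    [DecidableRel G.Adj] (j : ℕ) :
    (∀ S : Finset V, S.card = j → IsDomSet G S) ↔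
      Fintype.card V - G.minDegree ≤ j := by
  classical
  constructor
  · intro h
    by_contra hlt
    push_neg at hlt
    obtain ⟨v, hv⟩ := G.exists_minimal_degree_vertex
    set A : Finset V := insert v (G.neighborFinset v) with hA
    have hvA : v ∉ G.neighborFinset v := by simp
    have hAcard : A.card = G.degree v + 1 := by
      rw [hA, Finset.card_insert_of_notMem hvA, G.card_neighborFinset_eq_degree]
    have hAle : A.card ≤ Fintype.card V := Finset.card_le_univ A
    have hcompl : (Finset.univ \ A).card = Fintype.card V - A.card := by
      rw [Finset.card_sdiff_of_subset (Finset.subset_univ A), Finset.card_univ]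
    have hjle : j ≤ (Finset.univ \ A).card := by omega
    obtain ⟨T, hTsub, hTcard⟩ := Finset.exists_subset_card_eq hjle
    have hdom := h T hTcard
    have hvT : v ∉ T := by
      intro hvT
      have := hTsub hvT
      simp [hA] at this
    obtain ⟨u, huT, hadj⟩ := hdom v hvT
    have := hTsub huT
    rw [Finset.mem_sdiff] at this
    exact this.2 (by simp [hA, hadj.symm])
  · intro hj S hSj v hvS
    by_contra hno
    push_neg at hno
    set A : Finset V := insert v (G.neighborFinset v) with hA
    have hvA : v ∉ G.neighborFinset v := by simp
    have hAcard : A.card = G.degree v + 1 := by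
      rw [hA, Finset.card_insert_of_notMem hvA, G.card_neighborFinset_eq_degree]
    have hAle : A.card ≤ Fintype.card V := Finset.card_le_univ A
    have hSsub : S ⊆ Finset.univ \ A := by
      intro u huS
      rw [Finset.mem_sdiff]
      refine ⟨Finset.mem_univ u, ?_⟩
      simp only [hA, Finset.mem_insert, SimpleGraph.mem_neighborFinset]
      rintro (rfl | hadj)
      · exact hvS huS
      · exact hno u huS hadj.symm
    have hScard : S.card ≤ Fintype.card V - A.card := by
      have := Finset.card_le_card hSsub
      rwa [Finset.card_sdiff_of_subset (Finset.subset_univ A), Finset.card_univ] at this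
    have hmd : G.minDegree ≤ G.degree v := G.minDegree_le_degree v
    omega

theorem minDegree_eq_card_sub_sInf {V : Type*} [Fintype V] [Nonempty V] (G : SimpleGraph V)
    [DecidableRel G.Adj] (l : ℕ)
    (hl : l = sInf {j : ℕ | domCount G j = (Fintype.card V).choose j}) :
    G.minDegree = Fintype.card V - l := by
  have hset : {j : ℕ | domCount G j = (Fintype.card V).choose j}
      = Set.Ici (Fintype.card V - G.minDegree) := by
    ext j
    simp only [Set.mem_setOf_eq, Set.mem_Ici]
    rw [domCount_eq_choose_iff, all_dom_iff]
  rw [hset, csInf_Ici] at hl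
  obtain ⟨v, hv⟩ := G.exists_minimal_degree_vertex
  have hlt : G.degree v < Fintype.card V := G.degree_lt_card_verts v
  omega
end

section
/- Let G be a finite simple graph of order n ≥ 1 and let l = min { j : d(G,j) = C(n,j) }. Then G has at least C(n, l−1) − d(G, l−1) vertices of degree δ(G) = n − l. -/
section Aux

variable {V : Type*} [Fintype V] [DecidableEq V] (G : SimpleGraph V) [DecidableRel G.Adj]

open Finset

/-- Any set of size at least `n - δ` dominates. -/
lemma aux_dom (S : Finset V) (h : Fintype.card V - G.minDegree ≤ S.card) :
    IsDomSet G S := by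
  classical
  intro v hv
  by_contra hc
  push_neg at hc
  have hsub : insert v (G.neighborFinset v) ⊆ Sᶜ := by
    intro u hu
    simp only [Finset.mem_insert, SimpleGraph.mem_neighborFinset] at hu
    simp only [Finset.mem_compl]
    rcases hu with rfl | hadj
    · exact hv
    · intro huS
      exact hc u huS hadj.symm
  have h1 : G.degree v + 1 ≤ (Sᶜ : Finset V).card := by
    have h2 := Finset.card_le_card hsub
    rwa [Finset.card_insert_of_notMem (by simp),
      SimpleGraph.card_neighborFinset_eq_degree] at h2
  have h3 : (Sᶜ : Finset V).card = Fintype.card V - S.card := Finset.card_compl S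
  have h4 : G.minDegree ≤ G.degree v := G.minDegree_le_degree v
  have h5 : S.card ≤ Fintype.card V := Finset.card_le_card (Finset.subset_univ S) |>.trans_eq
    Finset.card_univ
  omega

/-- A non-dominating set lies in the complement of some closed neighborhood. -/
lemma aux_nondom (S : Finset V) (h : ¬ IsDomSet G S) :
    ∃ v : V, S ⊆ (insert v (G.neighborFinset v))ᶜ := by
  classical
  rw [IsDomSet] at h
  push_neg at h
  obtain ⟨v, hv, hne⟩ := h
  refine ⟨v, fun u hu => ?_⟩
  simp only [Finset.mem_compl, Finset.mem_insert, SimpleGraph.mem_neighborFinset]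
  push_neg
  exact ⟨fun huv => hv (huv ▸ hu), fun hadj => hne u hu hadj.symm⟩

lemma aux_split (j : ℕ) :
    (Fintype.card V).choose j
      = domCount G j + {S : Finset V | ¬ IsDomSet G S ∧ S.card = j}.ncard := by
  classical
  have hU : {S : Finset V | S.card = j}
      = {S | IsDomSet G S ∧ S.card = j} ∪ {S | ¬ IsDomSet G S ∧ S.card = j} := by
    ext S; by_cases h : IsDomSet G S <;> simp [h]
  have hd : Disjoint {S : Finset V | IsDomSet G S ∧ S.card = j}
      {S : Finset V | ¬ IsDomSet G S ∧ S.card = j} := by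
    rw [Set.disjoint_left]; rintro S ⟨h1, _⟩ ⟨h2, _⟩; exact h2 h1
  have hc : {S : Finset V | S.card = j}.ncard = (Fintype.card V).choose j := by
    have he : {S : Finset V | S.card = j} = ↑(Finset.powersetCard j (Finset.univ : Finset V)) := by
      ext S; simp [Finset.mem_powersetCard]
    rw [he, Set.ncard_coe_finset, Finset.card_powersetCard, Finset.card_univ]
  rw [← hc, hU, Set.ncard_union_eq hd (Set.toFinite _) (Set.toFinite _), domCount]

end Aux

theorem card_minDegree_vertices_ge {V : Type*} [Fintype V] [Nonempty V] (G : SimpleGraph V)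
    [DecidableRel G.Adj] (l : ℕ)
    (hl : l = sInf {j : ℕ | domCount G j = (Fintype.card V).choose j}) :
    G.minDegree = Fintype.card V - l ∧
    (Fintype.card V).choose (l - 1) - domCount G (l - 1) ≤
      (Finset.univ.filter fun v : V => G.degree v = G.minDegree).card := by
  classical
  set n := Fintype.card V with hn
  set δ := G.minDegree with hδ
  obtain ⟨w, hw⟩ := G.exists_minimal_degree_vertex
  have hδn : δ < n := lt_of_le_of_lt (G.minDegree_le_degree w) (G.degree_lt_card_verts w)
  -- the set in hl is exactly Ici (n - δ)
  have hset : {j : ℕ | domCount G j = (Fintype.card V).choose j} = Set.Ici (n - δ) := by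
    ext j
    simp only [Set.mem_setOf_eq, Set.mem_Ici]
    constructor
    · intro hj
      by_contra hlt
      push_neg at hlt
      -- build a non-dominating set of size j
      have hTcard : j ≤ ((insert w (G.neighborFinset w))ᶜ : Finset V).card := by
        have : (insert w (G.neighborFinset w)).card = δ + 1 := by
          rw [Finset.card_insert_of_notMem (by simp),
            SimpleGraph.card_neighborFinset_eq_degree, ← hw]
        rw [Finset.card_compl, this]
        omega
      obtain ⟨S, hS, hScard⟩ := Finset.exists_subset_card_eq hTcard
      have hnd : ¬ IsDomSet G S := by
        intro hdom
        obtain ⟨u, huS, hadj⟩ := hdom w (by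
          intro hwS
          have := hS hwS
          simp at this)
        have := hS huS
        simp only [Finset.mem_compl, Finset.mem_insert, SimpleGraph.mem_neighborFinset] at this
        exact this (Or.inr hadj.symm)
      have hsplit := aux_split G j
      have hA : {S : Finset V | ¬ IsDomSet G S ∧ S.card = j}.ncard ≠ 0 := by
        intro h0
        rw [Set.ncard_eq_zero (Set.toFinite _)] at h0
        have : S ∈ ({S : Finset V | ¬ IsDomSet G S ∧ S.card = j}) := ⟨hnd, hScard⟩
        rw [h0] at this
        exact this
      omega
    · intro hj
      have hA : {S : Finset V | ¬ IsDomSet G S ∧ S.card = j} = ∅ := by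
        ext S
        simp only [Set.mem_setOf_eq, Set.mem_empty_iff_false, iff_false, not_and]
        intro hnd hcard
        exact hnd (aux_dom G S (by omega))
      have hsplit := aux_split G j
      rw [hA, Set.ncard_empty] at hsplit
      omega
  have hl' : l = n - δ := by rw [hl, hset, csInf_Ici]
  have hl1 : 1 ≤ l := by omega
  refine ⟨by omega, ?_⟩
  -- second part
  have hsplit := aux_split G (l - 1)
  have key : {S : Finset V | ¬ IsDomSet G S ∧ S.card = l - 1}.ncard ≤
      (Finset.univ.filter fun v : V => G.degree v = δ).card := by
    have hsub : {S : Finset V | ¬ IsDomSet G S ∧ S.card = l - 1} ⊆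
        ↑((Finset.univ.filter fun v : V => G.degree v = δ).image
          (fun v => (insert v (G.neighborFinset v))ᶜ)) := by
      rintro S ⟨hnd, hcard⟩
      obtain ⟨v, hv⟩ := aux_nondom G S hnd
      have hdv : G.degree v < n := G.degree_lt_card_verts v
      have hδv : δ ≤ G.degree v := G.minDegree_le_degree v
      have hTc : ((insert v (G.neighborFinset v))ᶜ : Finset V).card = n - (G.degree v + 1) := by
        rw [Finset.card_compl, Finset.card_insert_of_notMem (by simp),
          SimpleGraph.card_neighborFinset_eq_degree]
      have hle : ((insert v (G.neighborFinset v))ᶜ : Finset V).card ≤ S.card := by omega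
      have hSeq : S = (insert v (G.neighborFinset v))ᶜ :=
        Finset.eq_of_subset_of_card_le hv hle
      have hdeg : G.degree v = δ := by
        have := hSeq ▸ hcard
        omega
      simp only [Finset.coe_image, Set.mem_image, Finset.mem_coe, Finset.mem_filter,
        Finset.mem_univ, true_and]
      exact ⟨v, hdeg, hSeq.symm⟩
    calc {S : Finset V | ¬ IsDomSet G S ∧ S.card = l - 1}.ncard
        ≤ (((Finset.univ.filter fun v : V => G.degree v = δ).image
          (fun v => (insert v (G.neighborFinset v))ᶜ)) : Finset (Finset V)).card := by
          rw [← Set.ncard_coe_finset]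
          exact Set.ncard_le_ncard hsub (Set.toFinite _)
      _ ≤ _ := Finset.card_image_le
  rw [hsplit, Nat.add_sub_cancel_left]
  exact key
end

section
/- Let H be a finite k-regular simple graph such that for every two distinct vertices u, v of H one has N[u] ≠ N[v]. If G is a finite simple graph with the same domination polynomial as H (i.e., d(G,i) = d(H,i) for all i ≥ 1), then G is also a k-regular graph. -/
open Finset

section Aux

lemma ncard_eq_filter_card {α : Type*} [Fintype α] (p : α → Prop) [DecidablePred p] :
    {x | p x}.ncard = (univ.filter p).card := by
  rw [← Set.ncard_coe_finset]
  congr 1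
  ext x
  simp

variable {V : Type*} [Fintype V] [DecidableEq V]

/-- Closed neighborhood as a finset. -/
def cnbhd (G : SimpleGraph V) [DecidableRel G.Adj] (v : V) : Finset V :=
  insert v (G.neighborFinset v)

lemma card_cnbhd (G : SimpleGraph V) [DecidableRel G.Adj] (v : V) :
    (cnbhd G v).card = G.degree v + 1 := by
  rw [cnbhd, card_insert_of_notMem (by simp), SimpleGraph.card_neighborFinset_eq_degree]

lemma not_isDomSet_iff (G : SimpleGraph V) [DecidableRel G.Adj] (S : Finset V) :
    ¬ IsDomSet G S ↔ ∃ v, cnbhd G v ⊆ Sᶜ := by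
  simp only [IsDomSet, cnbhd]
  push_neg
  constructor
  · rintro ⟨v, hvS, hv⟩
    refine ⟨v, fun x hx => ?_⟩
    rw [mem_insert] at hx
    rw [mem_compl]
    rcases hx with rfl | hadj
    · exact hvS
    · rw [SimpleGraph.mem_neighborFinset] at hadj
      intro hxS
      exact hv x hxS hadj.symm
  · rintro ⟨v, hsub⟩
    have hvS : v ∉ S := by
      have := hsub (mem_insert_self v _)
      rwa [mem_compl] at this
    refine ⟨v, hvS, fun u huS hadj => ?_⟩
    have : u ∈ Sᶜ := hsub (mem_insert_of_mem
      (by rw [SimpleGraph.mem_neighborFinset]; exact hadj.symm))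
    rw [mem_compl] at this
    exact this huS

/-- Number of sets of size `j` containing some closed neighborhood. -/
noncomputable def badCount (G : SimpleGraph V) [DecidableRel G.Adj] (j : ℕ) : ℕ :=
  {T : Finset V | T.card = j ∧ ∃ v, cnbhd G v ⊆ T}.ncard

lemma domCount_add_badCount (G : SimpleGraph V) [DecidableRel G.Adj] (i : ℕ)
    (hi : i ≤ Fintype.card V) :
    domCount G i + badCount G (Fintype.card V - i) = (Fintype.card V).choose i := by
  classical
  unfold domCount badCount
  rw [ncard_eq_filter_card, ncard_eq_filter_card]
  have hbij : (univ.filter fun T : Finset V =>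
      T.card = Fintype.card V - i ∧ ∃ v, cnbhd G v ⊆ T).card
      = (univ.filter fun S : Finset V => ¬ IsDomSet G S ∧ S.card = i).card := by
    refine card_bij' (fun T _ => Tᶜ) (fun S _ => Sᶜ) ?_ ?_ ?_ ?_
    · intro T hT
      simp only [mem_filter, mem_univ, true_and] at hT ⊢
      obtain ⟨hcard, v, hsub⟩ := hT
      refine ⟨?_, ?_⟩
      · rw [not_isDomSet_iff]
        exact ⟨v, by rwa [compl_compl]⟩
      · rw [card_compl, hcard]
        omega
    · intro S hS
      simp only [mem_filter, mem_univ, true_and] at hS ⊢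
      obtain ⟨hnd, hcard⟩ := hS
      rw [not_isDomSet_iff] at hnd
      exact ⟨by rw [card_compl, hcard], hnd⟩
    · intro T _; exact compl_compl T
    · intro S _; exact compl_compl S
  rw [hbij]
  have hsplit := card_filter_add_card_filter_not
    (s := univ.filter fun S : Finset V => S.card = i) (p := fun S => IsDomSet G S)
  rw [filter_filter, filter_filter] at hsplit
  have e1 : (univ.filter fun S : Finset V => IsDomSet G S ∧ S.card = i)
      = univ.filter fun S : Finset V => S.card = i ∧ IsDomSet G S :=
    filter_congr fun x _ => and_comm
  have e2 : (univ.filter fun S : Finset V => ¬ IsDomSet G S ∧ S.card = i)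
      = univ.filter fun S : Finset V => S.card = i ∧ ¬ IsDomSet G S :=
    filter_congr fun x _ => and_comm
  rw [e1, e2, hsplit]
  have huniv : (univ.filter fun S : Finset V => S.card = i) = powersetCard i univ := by
    rw [powersetCard_eq_filter, powerset_univ]
  rw [huniv, card_powersetCard, card_univ]

lemma badCount_eq_zero (G : SimpleGraph V) [DecidableRel G.Adj] (j : ℕ)
    (h : ∀ v, j < (cnbhd G v).card) : badCount G j = 0 := by
  classical
  unfold badCount
  rw [ncard_eq_filter_card, card_eq_zero, filter_eq_empty_iff]
  rintro T -
  rintro ⟨hcard, v, hsub⟩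
  have := card_le_card hsub
  rw [hcard] at this
  exact absurd this (Nat.not_le.mpr (h v))

lemma badCount_pos (G : SimpleGraph V) [DecidableRel G.Adj] (v : V) :
    0 < badCount G ((cnbhd G v).card) := by
  classical
  unfold badCount
  rw [ncard_eq_filter_card, card_pos]
  exact ⟨cnbhd G v, mem_filter.mpr ⟨mem_univ _, rfl, v, subset_rfl⟩⟩

lemma badCount_regular (H : SimpleGraph V) [DecidableRel H.Adj] (k : ℕ)
    (hreg : H.IsRegularOfDegree k) (hinj : Function.Injective (cnbhd H)) :
    badCount H (k + 1) = Fintype.card V := by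
  classical
  unfold badCount
  rw [ncard_eq_filter_card]
  have himage : (univ.filter fun T : Finset V => T.card = k + 1 ∧ ∃ v, cnbhd H v ⊆ T)
      = univ.image (cnbhd H) := by
    ext T
    simp only [mem_filter, mem_univ, true_and, mem_image]
    constructor
    · rintro ⟨hcard, v, hsub⟩
      have h1 : (cnbhd H v).card = k + 1 := by rw [card_cnbhd, hreg v]
      exact ⟨v, (eq_of_subset_of_card_le hsub (le_of_eq (hcard.trans h1.symm)))⟩
    · rintro ⟨v, rfl⟩
      exact ⟨by rw [card_cnbhd, hreg v], v, subset_rfl⟩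
  rw [himage, card_image_of_injective _ hinj, card_univ]

omit [DecidableEq V] in
lemma domCount_card_eq_one (G : SimpleGraph V) :
    domCount G (Fintype.card V) = 1 := by
  unfold domCount
  have hset : {S : Finset V | IsDomSet G S ∧ S.card = Fintype.card V} = {(univ : Finset V)} := by
    ext S
    simp only [Set.mem_setOf_eq, Set.mem_singleton_iff]
    constructor
    · rintro ⟨-, hcard⟩
      exact eq_univ_of_card S hcard
    · rintro rfl
      exact ⟨fun v hv => absurd (mem_univ v) hv, card_univ⟩
  rw [hset, Set.ncard_singleton]

omit [DecidableEq V] in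
lemma domCount_eq_zero_of_lt (G : SimpleGraph V) {i : ℕ} (h : Fintype.card V < i) :
    domCount G i = 0 := by
  unfold domCount
  have hset : {S : Finset V | IsDomSet G S ∧ S.card = i} = ∅ := by
    ext S
    simp only [Set.mem_setOf_eq, Set.mem_empty_iff_false, iff_false, not_and]
    intro _
    have h2 := card_le_univ S
    omega
  rw [hset, Set.ncard_empty]

end Aux

theorem regular_of_domCount_eq {V W : Type*} [Fintype V] [Fintype W] [DecidableEq W]
    (G : SimpleGraph V) [DecidableRel G.Adj] (H : SimpleGraph W) [DecidableRel H.Adj] (k : ℕ)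
    (hreg : H.IsRegularOfDegree k)
    (hnbr : ∀ u v : W, u ≠ v →
      insert u (H.neighborFinset u) ≠ insert v (H.neighborFinset v))
    (hdom : ∀ i : ℕ, 1 ≤ i → domCount G i = domCount H i) :
    G.IsRegularOfDegree k := by
  classical
  by_cases hW0 : Fintype.card W = 0
  · -- W empty, so V empty, vacuous
    have hV : Fintype.card V = 0 := by
      by_contra h
      have h1 : 1 ≤ Fintype.card V := Nat.pos_of_ne_zero h
      have hd := hdom (Fintype.card V) h1
      rw [domCount_card_eq_one, domCount_eq_zero_of_lt H (by omega)] at hd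
      exact one_ne_zero hd
    have hE : IsEmpty V := Fintype.card_eq_zero_iff.mp hV
    intro v
    exact (hE.false v).elim
  · have hW1 : 1 ≤ Fintype.card W := Nat.pos_of_ne_zero hW0
    have hcardV : Fintype.card V = Fintype.card W := by
      have h1 : Fintype.card W ≤ Fintype.card V := by
        by_contra h
        have hd := hdom (Fintype.card W) hW1
        rw [domCount_card_eq_one, domCount_eq_zero_of_lt G (by omega)] at hd
        exact zero_ne_one hd
      have h2 : Fintype.card V ≤ Fintype.card W := by
        by_contra h
        have hd := hdom (Fintype.card V) (by omega)
        rw [domCount_card_eq_one, domCount_eq_zero_of_lt H (by omega)] at hd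
        exact one_ne_zero hd
      omega
    by_cases hW2 : Fintype.card W = 1
    · -- single vertex case: k = 0
      obtain ⟨w⟩ := Fintype.card_pos_iff.mp hW1
      have hk : k = 0 := by
        have h1 := hreg w
        have h2 := H.degree_lt_card_verts w
        omega
      intro v
      have h3 := G.degree_lt_card_verts v
      omega
    · have hW2' : 2 ≤ Fintype.card W := by omega
      have hk2 : k + 2 ≤ Fintype.card W := by
        by_contra h
        obtain ⟨u, v, huv⟩ := Fintype.exists_pair_of_one_lt_card
          (by omega : 1 < Fintype.card W)
        have hk1 : k < Fintype.card W := by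
          have h1 := hreg u
          have h2 := H.degree_lt_card_verts u
          omega
        have huniv : ∀ w : W, insert w (H.neighborFinset w) = univ := by
          intro w
          apply eq_univ_of_card
          rw [show insert w (H.neighborFinset w) = cnbhd H w from rfl, card_cnbhd, hreg w]
          omega
        exact hnbr u v huv (by rw [huniv, huniv])
      have hinj : Function.Injective (cnbhd H) := by
        intro a b hab
        by_contra hne
        exact hnbr a b hne hab
      have hbadeq : ∀ j, 1 ≤ j → j ≤ k + 1 → badCount G j = badCount H j := by
        intro j hj1 hj2
        have h1 := domCount_add_badCount G (Fintype.card W - j) (by omega)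
        have h2 := domCount_add_badCount H (Fintype.card W - j) (by omega)
        rw [hcardV] at h1
        have hjj : Fintype.card W - (Fintype.card W - j) = j := by omega
        rw [hjj] at h1 h2
        have hd := hdom (Fintype.card W - j) (by omega)
        omega
      have hmin : ∀ v : V, k + 1 ≤ (cnbhd G v).card := by
        intro v
        by_contra h
        have h1 : 1 ≤ (cnbhd G v).card := card_pos.mpr ⟨v, mem_insert_self v _⟩
        have hz : badCount H ((cnbhd G v).card) = 0 :=
          badCount_eq_zero H _ (fun w => by rw [card_cnbhd H w, hreg w]; omega)
        have hp := badCount_pos G v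
        rw [hbadeq _ h1 (by omega), hz] at hp
        exact lt_irrefl 0 hp
      have hbG : badCount G (k + 1) = Fintype.card W := by
        rw [hbadeq (k + 1) (by omega) le_rfl, badCount_regular H k hreg hinj]
      have hFcard : (univ.filter fun T : Finset V =>
          T.card = k + 1 ∧ ∃ w, cnbhd G w ⊆ T).card = Fintype.card W := by
        rw [← ncard_eq_filter_card]
        exact hbG
      have hsubimg : (univ.filter fun T : Finset V =>
          T.card = k + 1 ∧ ∃ w, cnbhd G w ⊆ T) ⊆ univ.image (cnbhd G) := by
        intro T hT
        rw [mem_filter] at hT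
        obtain ⟨-, hcard, w, hsub⟩ := hT
        have hTw : cnbhd G w = T :=
          eq_of_subset_of_card_le hsub (by rw [hcard]; exact hmin w)
        exact mem_image.mpr ⟨w, mem_univ w, hTw⟩
      have himgcard : (univ.image (cnbhd G)).card ≤ Fintype.card W := by
        calc (univ.image (cnbhd G)).card ≤ univ.card := card_image_le
          _ = Fintype.card V := card_univ
          _ = Fintype.card W := hcardV
      have hFeq : (univ.filter fun T : Finset V =>
          T.card = k + 1 ∧ ∃ w, cnbhd G w ⊆ T) = univ.image (cnbhd G) :=
        eq_of_subset_of_card_le hsubimg (by rw [hFcard]; exact himgcard)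
      intro v
      have hv : cnbhd G v ∈ (univ.filter fun T : Finset V =>
          T.card = k + 1 ∧ ∃ w, cnbhd G w ⊆ T) := by
        rw [hFeq]
        exact mem_image_of_mem _ (mem_univ v)
      rw [mem_filter] at hv
      have hcv : (cnbhd G v).card = k + 1 := hv.2.1
      rw [card_cnbhd] at hcv
      omega
end

section
/- Every connected 3-regular (cubic) simple graph of order 10 has domination number 3, i.e., γ(G) = 3. -/
/-- The domination number of a graph: the minimum cardinality of a dominating set. -/
noncomputable def domNumber {V : Type*} (G : SimpleGraph V) : ℕ :=
  sInf {i : ℕ | ∃ S : Finset V, IsDomSet G S ∧ S.card = i}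

namespace CubicDom
open Finset
variable {V : Type*} [Fintype V] [DecidableEq V] (G : SimpleGraph V) [DecidableRel G.Adj]

def CN (v : V) : Finset V := insert v (G.neighborFinset v)

lemma mem_CN {v w : V} : w ∈ CN G v ↔ w = v ∨ G.Adj v w := by
  simp [CN, SimpleGraph.mem_neighborFinset]

lemma card_CN (hreg : G.IsRegularOfDegree 3) (v : V) : (CN G v).card = 4 := by
  rw [CN, card_insert_of_notMem (by simp), G.card_neighborFinset_eq_degree, hreg v]

lemma bitsKey : ∀ a1 a2 a3 a4 a5 a6 x1 x2 x3 x4 x5 x6 : Bool,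
    a1.toNat + a2.toNat + a3.toNat + a4.toNat + a5.toNat + a6.toNat = 3 →
    x1.toNat + x2.toNat + x3.toNat + x4.toNat + x5.toNat + x6.toNat = 3 →
    ∃ c1 c2 c3 : Bool,
      (((cond c1 a1 a2) || (cond c2 a3 a4) || (cond c3 a5 a6)) &&
      (!(cond c1 a1 a2) || !(cond c2 a3 a4) || !(cond c3 a5 a6)) &&
      ((cond c1 x1 x2) || (cond c2 x3 x4) || (cond c3 x5 x6)) &&
      (!(cond c1 x1 x2) || !(cond c2 x3 x4) || !(cond c3 x5 x6))) = true := by decide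

omit [Fintype V] [DecidableRel G.Adj] in
lemma countHelper {w1 w2 w3 w4 w5 w6 : V} (S : Finset V)
    (hsub : S ⊆ {w1, w2, w3, w4, w5, w6})
    (h6 : ({w1, w2, w3, w4, w5, w6} : Finset V).card = 6)
    (hS : S.card = 3) :
    (decide (w1 ∈ S)).toNat + (decide (w2 ∈ S)).toNat + (decide (w3 ∈ S)).toNat
      + (decide (w4 ∈ S)).toNat + (decide (w5 ∈ S)).toNat + (decide (w6 ∈ S)).toNat = 3 := by
  have le5 : ∀ (a b c d e : V), ({a, b, c, d, e} : Finset V).card ≤ 5 := by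
    intro a b c d e
    apply le_trans (card_insert_le _ _)
    apply Nat.succ_le_succ
    apply le_trans (card_insert_le _ _)
    apply Nat.succ_le_succ
    apply le_trans (card_insert_le _ _)
    apply Nat.succ_le_succ
    apply le_trans (card_insert_le _ _)
    apply Nat.succ_le_succ
    simp
  have le4 : ∀ (a b c d : V), ({a, b, c, d} : Finset V).card ≤ 4 := by
    intro a b c d
    apply le_trans (card_insert_le _ _)
    apply Nat.succ_le_succ
    apply le_trans (card_insert_le _ _)
    apply Nat.succ_le_succ
    apply le_trans (card_insert_le _ _)
    apply Nat.succ_le_succ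
    simp
  have le3 : ∀ (a b c : V), ({a, b, c} : Finset V).card ≤ 3 := by
    intro a b c
    apply le_trans (card_insert_le _ _)
    apply Nat.succ_le_succ
    apply le_trans (card_insert_le _ _)
    apply Nat.succ_le_succ
    simp
  have le2 : ∀ (a b : V), ({a, b} : Finset V).card ≤ 2 := by
    intro a b
    apply le_trans (card_insert_le _ _)
    apply Nat.succ_le_succ
    simp
  have hn1 : w1 ∉ ({w2, w3, w4, w5, w6} : Finset V) := by
    intro h
    rw [insert_eq_self.mpr h] at h6
    have := le5 w2 w3 w4 w5 w6
    omega
  have h5 : ({w2, w3, w4, w5, w6} : Finset V).card = 5 := by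
    rw [card_insert_of_notMem hn1] at h6; omega
  have hn2 : w2 ∉ ({w3, w4, w5, w6} : Finset V) := by
    intro h
    rw [insert_eq_self.mpr h] at h5
    have := le4 w3 w4 w5 w6
    omega
  have h4 : ({w3, w4, w5, w6} : Finset V).card = 4 := by
    rw [card_insert_of_notMem hn2] at h5; omega
  have hn3 : w3 ∉ ({w4, w5, w6} : Finset V) := by
    intro h
    rw [insert_eq_self.mpr h] at h4
    have := le3 w4 w5 w6
    omega
  have h3 : ({w4, w5, w6} : Finset V).card = 3 := by
    rw [card_insert_of_notMem hn3] at h4; omega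
  have hn4 : w4 ∉ ({w5, w6} : Finset V) := by
    intro h
    rw [insert_eq_self.mpr h] at h3
    have := le2 w5 w6
    omega
  have h2 : ({w5, w6} : Finset V).card = 2 := by
    rw [card_insert_of_notMem hn4] at h3; omega
  have hn5 : w5 ∉ ({w6} : Finset V) := by
    intro h
    rw [insert_eq_self.mpr h] at h2
    simp at h2
  have hsum : S.card = ∑ w ∈ ({w1, w2, w3, w4, w5, w6} : Finset V), if w ∈ S then 1 else 0 := by
    rw [← card_filter]
    congr 1
    rw [filter_mem_eq_inter, inter_eq_right.mpr hsub]
  rw [hS, sum_insert hn1, sum_insert hn2, sum_insert hn3, sum_insert hn4, sum_insert hn5,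
    sum_singleton] at hsum
  have hdec : ∀ (w : V), (decide (w ∈ S)).toNat = if w ∈ S then 1 else 0 := by
    intro w; by_cases h : w ∈ S <;> simp [h]
  rw [hdec, hdec, hdec, hdec, hdec, hdec]
  omega

lemma caseA (hreg : G.IsRegularOfDegree 3) (hcard : Fintype.card V = 10)
    {u v : V} (hdisj : Disjoint (CN G u) (CN G v)) :
    ∃ S : Finset V, IsDomSet G S ∧ S.card = 3 := by
  have huu : u ∈ CN G u := (mem_CN G).mpr (Or.inl rfl)
  have hvv : v ∈ CN G v := (mem_CN G).mpr (Or.inl rfl)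
  have huv : u ≠ v := by
    rintro rfl
    exact (Finset.disjoint_left.mp hdisj huu) huu
  have hcup : (CN G u ∪ CN G v).card = 8 := by
    rw [card_union_of_disjoint hdisj, card_CN G hreg, card_CN G hreg]
  set R := Finset.univ \ (CN G u ∪ CN G v) with hR
  have hcardR : R.card = 2 := by
    rw [hR, card_sdiff_of_subset (subset_univ _), card_univ, hcard, hcup]
  obtain ⟨x, y, hxy, hRxy⟩ := Finset.card_eq_two.mp hcardR
  have hxR : x ∈ R := by rw [hRxy]; simp
  have hyR : y ∈ R := by rw [hRxy]; simp
  have hmemR : ∀ {w : V}, w ∈ R ↔ (w ∉ CN G u ∧ w ∉ CN G v) := by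
    intro w; rw [hR]; simp [not_or]
  have hxcu : x ∉ CN G u := (hmemR.mp hxR).1
  have hxcv : x ∉ CN G v := (hmemR.mp hxR).2
  have hycu : y ∉ CN G u := (hmemR.mp hyR).1
  have hycv : y ∉ CN G v := (hmemR.mp hyR).2
  by_cases hz : ∃ z : V, (x = z ∨ G.Adj z x) ∧ (y = z ∨ G.Adj z y)
  · obtain ⟨z, hz1, hz2⟩ := hz
    have hzu : z ≠ u := by
      rintro rfl
      rcases hz1 with rfl | h
      · exact hxcu huu
      · exact hxcu ((mem_CN G).mpr (Or.inr h))
    have hzv : z ≠ v := by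
      rintro rfl
      rcases hz1 with rfl | h
      · exact hxcv hvv
      · exact hxcv ((mem_CN G).mpr (Or.inr h))
    refine ⟨{u, v, z}, ?_, ?_⟩
    · intro w hwS
      simp only [mem_insert, mem_singleton, not_or] at hwS
      obtain ⟨hwu, hwv, hwz⟩ := hwS
      by_cases hwR : w ∈ R
      · have : w = x ∨ w = y := by
          rw [hRxy] at hwR; simpa using hwR
        rcases this with rfl | rfl
        · rcases hz1 with rfl | h
          · exact absurd rfl hwz
          · exact ⟨z, by simp, h⟩
        · rcases hz2 with rfl | h
          · exact absurd rfl hwz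
          · exact ⟨z, by simp, h⟩
      · have : w ∈ CN G u ∪ CN G v := by
          by_contra hc
          exact hwR (mem_sdiff.mpr ⟨mem_univ w, hc⟩)
        rcases mem_union.mp this with h | h
        · rcases (mem_CN G).mp h with rfl | h'
          · exact absurd rfl hwu
          · exact ⟨u, by simp, h'⟩
        · rcases (mem_CN G).mp h with rfl | h'
          · exact absurd rfl hwv
          · exact ⟨v, by simp, h'⟩
    · rw [card_insert_of_notMem (by simp [huv, hzu.symm]),
        card_insert_of_notMem (by simp [hzv.symm]), card_singleton]
  · -- no vertex covers both x and y
    have hnadj : ¬ G.Adj x y := fun h => hz ⟨x, Or.inl rfl, Or.inr h⟩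
    have hnoc : ∀ z : V, G.Adj z x → ¬ G.Adj z y := fun z h1 h2 => hz ⟨z, Or.inr h1, Or.inr h2⟩
    set Nu := G.neighborFinset u with hNu
    set Nv := G.neighborFinset v with hNv
    set Nx := G.neighborFinset x with hNx
    set Ny := G.neighborFinset y with hNy
    have hmemNu : ∀ {w : V}, w ∈ Nu ↔ G.Adj u w := fun {w} => SimpleGraph.mem_neighborFinset _ _ _
    have hmemNv : ∀ {w : V}, w ∈ Nv ↔ G.Adj v w := fun {w} => SimpleGraph.mem_neighborFinset _ _ _
    have hmemNx : ∀ {w : V}, w ∈ Nx ↔ G.Adj x w := fun {w} => SimpleGraph.mem_neighborFinset _ _ _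
    have hmemNy : ∀ {w : V}, w ∈ Ny ↔ G.Adj y w := fun {w} => SimpleGraph.mem_neighborFinset _ _ _
    have hNuCN : Nu ⊆ CN G u := fun w hw => (mem_CN G).mpr (Or.inr (hmemNu.mp hw))
    have hNvCN : Nv ⊆ CN G v := fun w hw => (mem_CN G).mpr (Or.inr (hmemNv.mp hw))
    set M := Nu ∪ Nv with hM
    have hdisjN : Disjoint Nu Nv := by
      apply Finset.disjoint_left.mpr
      intro w hw1 hw2
      exact Finset.disjoint_left.mp hdisj (hNuCN hw1) (hNvCN hw2)
    have hcard3 : ∀ w : V, (G.neighborFinset w).card = 3 := by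
      intro w; rw [G.card_neighborFinset_eq_degree, hreg w]
    have hcardM : M.card = 6 := by
      rw [hM, card_union_of_disjoint hdisjN, hNu, hNv, hcard3, hcard3]
    have hxM : x ∉ M := by
      intro h
      rcases mem_union.mp h with h | h
      · exact hxcu (hNuCN h)
      · exact hxcv (hNvCN h)
    have hyM : y ∉ M := by
      intro h
      rcases mem_union.mp h with h | h
      · exact hycu (hNuCN h)
      · exact hycv (hNvCN h)
    have huM : u ∉ M := by
      intro h
      rcases mem_union.mp h with h | h
      · exact G.loopless.irrefl u (hmemNu.mp h)
      · exact Finset.disjoint_left.mp hdisj huu (hNvCN h)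
    have hvM : v ∉ M := by
      intro h
      rcases mem_union.mp h with h | h
      · exact Finset.disjoint_left.mp hdisj (hNuCN h) hvv
      · exact G.loopless.irrefl v (hmemNv.mp h)
    have hxau : ¬ G.Adj u x := fun h => hxcu ((mem_CN G).mpr (Or.inr h))
    have hxav : ¬ G.Adj v x := fun h => hxcv ((mem_CN G).mpr (Or.inr h))
    have hyau : ¬ G.Adj u y := fun h => hycu ((mem_CN G).mpr (Or.inr h))
    have hyav : ¬ G.Adj v y := fun h => hycv ((mem_CN G).mpr (Or.inr h))
    have hxu : x ≠ u := fun h => hxcu (h ▸ huu)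
    have hxv : x ≠ v := fun h => hxcv (h ▸ hvv)
    have hyu : y ≠ u := fun h => hycu (h ▸ huu)
    have hyv : y ≠ v := fun h => hycv (h ▸ hvv)
    have hUniv : ∀ w : V, w = u ∨ w = v ∨ w = x ∨ w = y ∨ w ∈ M := by
      intro w
      by_cases h1 : w ∈ CN G u
      · rcases (mem_CN G).mp h1 with rfl | h
        · exact Or.inl rfl
        · exact Or.inr (Or.inr (Or.inr (Or.inr (mem_union.mpr (Or.inl (hmemNu.mpr h))))))
      by_cases h2 : w ∈ CN G v
      · rcases (mem_CN G).mp h2 with rfl | h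
        · exact Or.inr (Or.inl rfl)
        · exact Or.inr (Or.inr (Or.inr (Or.inr (mem_union.mpr (Or.inr (hmemNv.mpr h))))))
      have : w ∈ R := hmemR.mpr ⟨h1, h2⟩
      rw [hRxy] at this
      rcases (by simpa using this : w = x ∨ w = y) with rfl | rfl
      · exact Or.inr (Or.inr (Or.inl rfl))
      · exact Or.inr (Or.inr (Or.inr (Or.inl rfl)))
    have hNxM : Nx ⊆ M := by
      intro w hw
      have hadj : G.Adj x w := hmemNx.mp hw
      rcases hUniv w with h | h | h | h | h
      · rw [h] at hadj; exact absurd (G.adj_symm hadj) hxau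
      · rw [h] at hadj; exact absurd (G.adj_symm hadj) hxav
      · rw [h] at hadj; exact absurd hadj (G.loopless.irrefl x)
      · rw [h] at hadj; exact absurd hadj hnadj
      · exact h
    have hNyM : Ny ⊆ M := by
      intro w hw
      have hadj : G.Adj y w := hmemNy.mp hw
      rcases hUniv w with h | h | h | h | h
      · rw [h] at hadj; exact absurd (G.adj_symm hadj) hyau
      · rw [h] at hadj; exact absurd (G.adj_symm hadj) hyav
      · rw [h] at hadj; exact absurd (G.adj_symm hadj) hnadj
      · rw [h] at hadj; exact absurd hadj (G.loopless.irrefl y)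
      · exact h
    have hdisjxy : Disjoint Nx Ny := by
      apply Finset.disjoint_left.mpr
      intro w hw1 hw2
      exact hnoc w (G.adj_symm (hmemNx.mp hw1)) (G.adj_symm (hmemNy.mp hw2))
    have hMxy : M = Nx ∪ Ny := by
      symm
      apply Finset.eq_of_subset_of_card_le (union_subset hNxM hNyM)
      rw [card_union_of_disjoint hdisjxy, hNx, hNy, hcard3, hcard3, hcardM]
    -- each m in M has exactly one neighbor inside M
    have hpartner : ∀ m ∈ M, ∃ q ∈ M, G.Adj m q ∧ ∀ w ∈ M, G.Adj m w → w = q := by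
      intro m hm
      -- find the unique {u,v}-neighbor and {x,y}-neighbor
      obtain ⟨c, hcuv, hcadj, hcne, hcM⟩ :
          ∃ c, (c = u ∨ c = v) ∧ G.Adj m c ∧ (∀ w, G.Adj m w → w ≠ c → w ≠ u ∧ w ≠ v) ∧ c ∉ M := by
        rcases mem_union.mp hm with h | h
        · refine ⟨u, Or.inl rfl, G.adj_symm (hmemNu.mp h), ?_, huM⟩
          intro w hadj hne
          refine ⟨fun he => hne he, ?_⟩
          intro he
          rw [he] at hadj
          exact Finset.disjoint_left.mp hdisjN h (hmemNv.mpr (G.adj_symm hadj))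
        · refine ⟨v, Or.inr rfl, G.adj_symm (hmemNv.mp h), ?_, hvM⟩
          intro w hadj hne
          refine ⟨?_, fun he => hne he⟩
          intro he
          rw [he] at hadj
          exact Finset.disjoint_left.mp hdisjN (hmemNu.mpr (G.adj_symm hadj)) h
      obtain ⟨d, hdxy, hdadj, hdne, hdM⟩ :
          ∃ d, (d = x ∨ d = y) ∧ G.Adj m d ∧ (∀ w, G.Adj m w → w ≠ d → w ≠ x ∧ w ≠ y) ∧ d ∉ M := by
        have hm' : m ∈ Nx ∪ Ny := hMxy ▸ hm
        rcases mem_union.mp hm' with h | h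
        · refine ⟨x, Or.inl rfl, G.adj_symm (hmemNx.mp h), ?_, hxM⟩
          intro w hadj hne
          refine ⟨fun he => hne he, ?_⟩
          intro he
          rw [he] at hadj
          exact hnoc m (G.adj_symm (hmemNx.mp h)) hadj
        · refine ⟨y, Or.inr rfl, G.adj_symm (hmemNy.mp h), ?_, hyM⟩
          intro w hadj hne
          refine ⟨?_, fun he => hne he⟩
          intro he
          rw [he] at hadj
          exact hnoc m hadj (G.adj_symm (hmemNy.mp h))
      have hcd : c ≠ d := by
        intro he
        rcases hcuv with rfl | rfl <;> rcases hdxy with h2 | h2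
        · exact hxu (h2 ▸ he).symm
        · exact hyu (h2 ▸ he).symm
        · exact hxv (h2 ▸ he).symm
        · exact hyv (h2 ▸ he).symm
      have hsplit : G.neighborFinset m = insert c (insert d (M.filter (G.Adj m))) := by
        apply Finset.ext
        intro w
        simp only [SimpleGraph.mem_neighborFinset, mem_insert, mem_filter]
        constructor
        · intro hadj
          by_cases h1 : w = c
          · exact Or.inl h1
          by_cases h2 : w = d
          · exact Or.inr (Or.inl h2)
          rcases hUniv w with h | h | h | h | h
          · exact absurd h (hcne w hadj h1).1
          · exact absurd h (hcne w hadj h1).2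
          · exact absurd h (hdne w hadj h2).1
          · exact absurd h (hdne w hadj h2).2
          · exact Or.inr (Or.inr ⟨h, hadj⟩)
        · rintro (rfl | rfl | ⟨_, h⟩)
          · exact hcadj
          · exact hdadj
          · exact h
      have hcards : (M.filter (G.Adj m)).card = 1 := by
        have h3 := hcard3 m
        rw [hsplit, card_insert_of_notMem, card_insert_of_notMem] at h3
        · omega
        · intro h; exact hdM (mem_filter.mp h).1
        · intro h
          rcases mem_insert.mp h with h | h
          · exact hcd h
          · exact hcM (mem_filter.mp h).1
      obtain ⟨q, hq⟩ := Finset.card_eq_one.mp hcards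
      have hqmem : q ∈ M.filter (G.Adj m) := hq ▸ mem_singleton_self q
      refine ⟨q, (mem_filter.mp hqmem).1, (mem_filter.mp hqmem).2, ?_⟩
      intro w hwM hwadj
      have : w ∈ M.filter (G.Adj m) := mem_filter.mpr ⟨hwM, hwadj⟩
      rw [hq] at this
      exact mem_singleton.mp this
    -- extract the three matching pairs
    have hMne : M.Nonempty := card_pos.mp (by omega)
    obtain ⟨m1, hm1M⟩ := hMne
    obtain ⟨p1, hp1M, hadj1, huniq1⟩ := hpartner m1 hm1M
    have hne1 : m1 ≠ p1 := fun h => G.loopless.irrefl m1 (h ▸ hadj1)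
    have huniq1' : ∀ w ∈ M, G.Adj p1 w → w = m1 := by
      obtain ⟨q, hqM, hqadj, hquniq⟩ := hpartner p1 hp1M
      have hqm : m1 = q := hquniq m1 hm1M (G.adj_symm hadj1)
      intro w hw hadj
      exact (hquniq w hw hadj).trans hqm.symm
    set M2 := M \ {m1, p1} with hM2
    have hsub1 : ({m1, p1} : Finset V) ⊆ M := by
      intro w hw
      rcases mem_insert.mp hw with rfl | hw
      · exact hm1M
      · exact mem_singleton.mp hw ▸ hp1M
    have hcardM2 : M2.card = 4 := by
      rw [hM2, card_sdiff_of_subset hsub1, hcardM, card_insert_of_notMem (by simp [hne1]), card_singleton]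
    have hM2ne : M2.Nonempty := card_pos.mp (by omega)
    obtain ⟨m2, hm2M2⟩ := hM2ne
    have hm2M : m2 ∈ M := (mem_sdiff.mp hm2M2).1
    have hm2n : m2 ≠ m1 ∧ m2 ≠ p1 := by
      have := (mem_sdiff.mp hm2M2).2
      simp only [mem_insert, mem_singleton, not_or] at this
      exact this
    obtain ⟨p2, hp2M, hadj2, huniq2⟩ := hpartner m2 hm2M
    have hne2 : m2 ≠ p2 := fun h => G.loopless.irrefl m2 (h ▸ hadj2)
    have huniq2' : ∀ w ∈ M, G.Adj p2 w → w = m2 := by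
      obtain ⟨q, hqM, hqadj, hquniq⟩ := hpartner p2 hp2M
      have hqm : m2 = q := hquniq m2 hm2M (G.adj_symm hadj2)
      intro w hw hadj
      exact (hquniq w hw hadj).trans hqm.symm
    have hp2m1 : p2 ≠ m1 := by
      intro h
      exact hm2n.2 (huniq1 m2 hm2M (G.adj_symm (h ▸ hadj2)))
    have hp2p1 : p2 ≠ p1 := by
      intro h
      exact hm2n.1 (huniq1' m2 hm2M (G.adj_symm (h ▸ hadj2)))
    have hp2M2 : p2 ∈ M2 := mem_sdiff.mpr ⟨hp2M, by simp [hp2m1, hp2p1]⟩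
    set M3 := M2 \ {m2, p2} with hM3
    have hsub2 : ({m2, p2} : Finset V) ⊆ M2 := by
      intro w hw
      rcases mem_insert.mp hw with rfl | hw
      · exact hm2M2
      · exact mem_singleton.mp hw ▸ hp2M2
    have hcardM3 : M3.card = 2 := by
      rw [hM3, card_sdiff_of_subset hsub2, hcardM2, card_insert_of_notMem (by simp [hne2]), card_singleton]
    have hM3ne : M3.Nonempty := card_pos.mp (by omega)
    obtain ⟨m3, hm3M3⟩ := hM3ne
    have hm3M2 : m3 ∈ M2 := (mem_sdiff.mp hm3M3).1
    have hm3M : m3 ∈ M := (mem_sdiff.mp hm3M2).1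
    have hm3n12 : m3 ≠ m1 ∧ m3 ≠ p1 := by
      have := (mem_sdiff.mp hm3M2).2
      simp only [mem_insert, mem_singleton, not_or] at this
      exact this
    have hm3n22 : m3 ≠ m2 ∧ m3 ≠ p2 := by
      have := (mem_sdiff.mp hm3M3).2
      simp only [mem_insert, mem_singleton, not_or] at this
      exact this
    obtain ⟨p3, hp3M, hadj3, huniq3⟩ := hpartner m3 hm3M
    have hne3 : m3 ≠ p3 := fun h => G.loopless.irrefl m3 (h ▸ hadj3)
    have hp3m1 : p3 ≠ m1 := fun h => hm3n12.2 (huniq1 m3 hm3M (G.adj_symm (h ▸ hadj3)))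
    have hp3p1 : p3 ≠ p1 := fun h => hm3n12.1 (huniq1' m3 hm3M (G.adj_symm (h ▸ hadj3)))
    have hp3m2 : p3 ≠ m2 := fun h => hm3n22.2 (huniq2 m3 hm3M (G.adj_symm (h ▸ hadj3)))
    have hp3p2 : p3 ≠ p2 := fun h => hm3n22.1 (huniq2' m3 hm3M (G.adj_symm (h ▸ hadj3)))
    have hp3M3 : p3 ∈ M3 :=
      mem_sdiff.mpr ⟨mem_sdiff.mpr ⟨hp3M, by simp [hp3m1, hp3p1]⟩, by simp [hp3m2, hp3p2]⟩
    have hMeq : M = {m1, p1, m2, p2, m3, p3} := by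
      have hM3eq : M3 = {m3, p3} := by
        symm
        apply Finset.eq_of_subset_of_card_le
        · intro z hz
          rcases mem_insert.mp hz with rfl | hz
          · exact hm3M3
          · exact mem_singleton.mp hz ▸ hp3M3
        · rw [hcardM3, card_insert_of_notMem (by simp [hne3]), card_singleton]
      apply Finset.ext
      intro w
      simp only [mem_insert, mem_singleton]
      constructor
      · intro hw
        by_cases h1 : w = m1
        · exact Or.inl h1
        by_cases h2 : w = p1
        · exact Or.inr (Or.inl h2)
        have hwM2 : w ∈ M2 := mem_sdiff.mpr ⟨hw, by simp [h1, h2]⟩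
        by_cases h3 : w = m2
        · exact Or.inr (Or.inr (Or.inl h3))
        by_cases h4 : w = p2
        · exact Or.inr (Or.inr (Or.inr (Or.inl h4)))
        have hwM3 : w ∈ M3 := mem_sdiff.mpr ⟨hwM2, by simp [h3, h4]⟩
        rw [hM3eq] at hwM3
        rcases mem_insert.mp hwM3 with h | h
        · exact Or.inr (Or.inr (Or.inr (Or.inr (Or.inl h))))
        · exact Or.inr (Or.inr (Or.inr (Or.inr (Or.inr (mem_singleton.mp h)))))
      · rintro (rfl | rfl | rfl | rfl | rfl | rfl)
        · exact hm1M
        · exact hp1M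
        · exact hm2M
        · exact hp2M
        · exact hm3M
        · exact hp3M
    -- counting memberships
    have h6 : ({m1, p1, m2, p2, m3, p3} : Finset V).card = 6 := hMeq ▸ hcardM
    have hsubNu : Nu ⊆ ({m1, p1, m2, p2, m3, p3} : Finset V) := by
      rw [← hMeq]
      exact subset_union_left
    have hsubNxx : Nx ⊆ ({m1, p1, m2, p2, m3, p3} : Finset V) := by
      rw [← hMeq]
      exact hNxM
    have hsuma := countHelper Nu hsubNu h6 (by rw [hNu]; exact hcard3 u)
    have hsumx := countHelper Nx hsubNxx h6 (by rw [hNx]; exact hcard3 x)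
    obtain ⟨c1, c2, c3, hbool⟩ := bitsKey _ _ _ _ _ _ _ _ _ _ _ _ hsuma hsumx
    -- the assembly principle
    have key : ∀ q1 q2 q3 : V,
        ((q1 ∈ Nu ∨ q2 ∈ Nu) ∨ q3 ∈ Nu) → ((q1 ∉ Nu ∨ q2 ∉ Nu) ∨ q3 ∉ Nu) →
        ((q1 ∈ Nx ∨ q2 ∈ Nx) ∨ q3 ∈ Nx) → ((q1 ∉ Nx ∨ q2 ∉ Nx) ∨ q3 ∉ Nx) →
        (q1 = m1 ∨ q1 = p1) → (q2 = m2 ∨ q2 = p2) → (q3 = m3 ∨ q3 = p3) →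
        ∃ S : Finset V, IsDomSet G S ∧ S.card = 3 := by
      intro q1 q2 q3 hitA hitB hitX hitY hq1 hq2 hq3
      have hq1M : q1 ∈ M := by
        rcases hq1 with rfl | rfl
        · exact hm1M
        · exact hp1M
      have hq2M : q2 ∈ M := by
        rcases hq2 with rfl | rfl
        · exact hm2M
        · exact hp2M
      have hq3M : q3 ∈ M := by
        rcases hq3 with rfl | rfl
        · exact hm3M
        · exact hp3M
      have hq12 : q1 ≠ q2 := by
        rcases hq1 with rfl | rfl <;> rcases hq2 with rfl | rfl
        · exact fun h => hm2n.1 h.symm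
        · exact fun h => hp2m1 h.symm
        · exact fun h => hm2n.2 h.symm
        · exact fun h => hp2p1 h.symm
      have hq13 : q1 ≠ q3 := by
        rcases hq1 with rfl | rfl <;> rcases hq3 with rfl | rfl
        · exact fun h => hm3n12.1 h.symm
        · exact fun h => hp3m1 h.symm
        · exact fun h => hm3n12.2 h.symm
        · exact fun h => hp3p1 h.symm
      have hq23 : q2 ≠ q3 := by
        rcases hq2 with rfl | rfl <;> rcases hq3 with rfl | rfl
        · exact fun h => hm3n22.1 h.symm
        · exact fun h => hp3m2 h.symm
        · exact fun h => hm3n22.2 h.symm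
        · exact fun h => hp3p2 h.symm
      have hcover : ∀ w ∈ M, w = q1 ∨ w = q2 ∨ w = q3 ∨ G.Adj q1 w ∨ G.Adj q2 w ∨ G.Adj q3 w := by
        intro w hw
        rw [hMeq] at hw
        simp only [mem_insert, mem_singleton] at hw
        rcases hw with rfl | rfl | rfl | rfl | rfl | rfl
        · rcases hq1 with rfl | rfl
          · exact Or.inl rfl
          · exact Or.inr (Or.inr (Or.inr (Or.inl (G.adj_symm hadj1))))
        · rcases hq1 with rfl | rfl
          · exact Or.inr (Or.inr (Or.inr (Or.inl hadj1)))
          · exact Or.inl rfl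
        · rcases hq2 with rfl | rfl
          · exact Or.inr (Or.inl rfl)
          · exact Or.inr (Or.inr (Or.inr (Or.inr (Or.inl (G.adj_symm hadj2)))))
        · rcases hq2 with rfl | rfl
          · exact Or.inr (Or.inr (Or.inr (Or.inr (Or.inl hadj2))))
          · exact Or.inr (Or.inl rfl)
        · rcases hq3 with rfl | rfl
          · exact Or.inr (Or.inr (Or.inl rfl))
          · exact Or.inr (Or.inr (Or.inr (Or.inr (Or.inr (G.adj_symm hadj3)))))
        · rcases hq3 with rfl | rfl
          · exact Or.inr (Or.inr (Or.inr (Or.inr (Or.inr hadj3))))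
          · exact Or.inr (Or.inr (Or.inl rfl))
      refine ⟨{q1, q2, q3}, ?_, ?_⟩
      · intro w hwS
        simp only [mem_insert, mem_singleton, not_or] at hwS
        have hv' : ∀ qi : V, qi ∈ M → qi ∉ Nu → G.Adj qi v := by
          intro qi hMi hn
          rcases mem_union.mp hMi with h | h
          · exact absurd h hn
          · exact G.adj_symm (hmemNv.mp h)
        have hy' : ∀ qi : V, qi ∈ M → qi ∉ Nx → G.Adj qi y := by
          intro qi hMi hn
          rw [hMxy] at hMi
          rcases mem_union.mp hMi with h | h
          · exact absurd h hn
          · exact G.adj_symm (hmemNy.mp h)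
        rcases hUniv w with he | he | he | he | hwM
        · rcases hitA with (h | h) | h
          · exact ⟨q1, by simp, he.symm ▸ G.adj_symm (hmemNu.mp h)⟩
          · exact ⟨q2, by simp, he.symm ▸ G.adj_symm (hmemNu.mp h)⟩
          · exact ⟨q3, by simp, he.symm ▸ G.adj_symm (hmemNu.mp h)⟩
        · rcases hitB with (h | h) | h
          · exact ⟨q1, by simp, he.symm ▸ hv' q1 hq1M h⟩
          · exact ⟨q2, by simp, he.symm ▸ hv' q2 hq2M h⟩
          · exact ⟨q3, by simp, he.symm ▸ hv' q3 hq3M h⟩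
        · rcases hitX with (h | h) | h
          · exact ⟨q1, by simp, he.symm ▸ G.adj_symm (hmemNx.mp h)⟩
          · exact ⟨q2, by simp, he.symm ▸ G.adj_symm (hmemNx.mp h)⟩
          · exact ⟨q3, by simp, he.symm ▸ G.adj_symm (hmemNx.mp h)⟩
        · rcases hitY with (h | h) | h
          · exact ⟨q1, by simp, he.symm ▸ hy' q1 hq1M h⟩
          · exact ⟨q2, by simp, he.symm ▸ hy' q2 hq2M h⟩
          · exact ⟨q3, by simp, he.symm ▸ hy' q3 hq3M h⟩
        · rcases hcover w hwM with h | h | h | h | h | h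
          · exact absurd h hwS.1
          · exact absurd h hwS.2.1
          · exact absurd h hwS.2.2
          · exact ⟨q1, by simp, h⟩
          · exact ⟨q2, by simp, h⟩
          · exact ⟨q3, by simp, h⟩
      · rw [card_insert_of_notMem (by simp [hq12, hq13]),
          card_insert_of_notMem (by simp [hq23]), card_singleton]
    cases c1 <;> cases c2 <;> cases c3 <;>
    · simp only [Bool.cond_false, Bool.cond_true, Bool.and_eq_true, Bool.or_eq_true,
        Bool.not_eq_true', decide_eq_true_eq, decide_eq_false_iff_not] at hbool
      obtain ⟨⟨⟨hA, hB⟩, hX⟩, hY⟩ := hbool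
      exact key _ _ _ hA hB hX hY (by simp) (by simp) (by simp)

omit [Fintype V] in
lemma doubleCount (A B : Finset V) :
    ∑ a ∈ A, (B.filter (G.Adj a)).card = ∑ b ∈ B, (A.filter (fun a => G.Adj a b)).card := by
  simp only [card_filter]
  exact Finset.sum_comm

lemma caseB (hreg : G.IsRegularOfDegree 3) (hcard : Fintype.card V = 10)
    (hB : ∀ a b : V, ((CN G a) ∩ (CN G b)).Nonempty) :
    ∃ S : Finset V, IsDomSet G S ∧ S.card = 3 := by
  have hNe : Nonempty V := Fintype.card_pos_iff.mp (by omega)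
  obtain ⟨u⟩ := hNe
  set A := G.neighborFinset u with hA
  set O := Finset.univ \ CN G u with hO
  have hAsub : A ⊆ CN G u := by
    intro a ha
    rw [hA, SimpleGraph.mem_neighborFinset] at ha
    exact (mem_CN G).mpr (Or.inr ha)
  have hcardO : O.card = 6 := by
    rw [hO, card_sdiff_of_subset (subset_univ _), card_univ, hcard, card_CN G hreg]
  have hmemO : ∀ {o : V}, o ∈ O ↔ (o ≠ u ∧ ¬ G.Adj u o) := by
    intro o
    simp [hO, mem_CN, not_or]
  have hone : ∀ o ∈ O, ∃ a ∈ A, G.Adj a o := by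
    intro o ho
    obtain ⟨w, hw⟩ := hB o u
    rw [mem_inter, mem_CN, mem_CN] at hw
    obtain ⟨hw1, hw2⟩ := hw
    have hou := (hmemO.mp ho)
    rcases hw1 with rfl | hadj
    · rcases hw2 with rfl | h
      · exact absurd rfl hou.1
      · exact absurd h hou.2
    · rcases hw2 with rfl | hadj2
      · exact absurd (G.adj_symm hadj) hou.2
      · refine ⟨w, ?_, G.adj_symm hadj⟩
        rw [hA, SimpleGraph.mem_neighborFinset]
        exact hadj2
  have huO : u ∉ O := by rw [hmemO]; simp
  have hcardA : A.card = 3 := by rw [hA, G.card_neighborFinset_eq_degree, hreg u]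
  have hdeg : ∀ v : V, (G.neighborFinset v).card = 3 := by
    intro v; rw [G.card_neighborFinset_eq_degree, hreg v]
  -- upper bound per a in A
  have hAO : ∀ a ∈ A, (O.filter (G.Adj a)).card ≤ 2 := by
    intro a ha
    have hu : u ∈ G.neighborFinset a := by
      simp only [SimpleGraph.mem_neighborFinset]
      exact G.adj_symm (by simpa [hA] using ha)
    have hsub : O.filter (G.Adj a) ⊆ (G.neighborFinset a).erase u := by
      intro w hw
      rw [mem_filter] at hw
      rw [mem_erase]
      refine ⟨fun h => huO (h ▸ hw.1), by simpa using hw.2⟩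
    calc (O.filter (G.Adj a)).card ≤ ((G.neighborFinset a).erase u).card := card_le_card hsub
      _ = 2 := by rw [card_erase_of_mem hu, hdeg a]
  -- each o has exactly one neighbor in A
  have honeeq : ∀ o ∈ O, (A.filter (fun a => G.Adj a o)).card = 1 := by
    have hsum_le : ∑ o ∈ O, (A.filter (fun a => G.Adj a o)).card ≤ 6 := by
      rw [← doubleCount]
      calc ∑ a ∈ A, (O.filter (G.Adj a)).card ≤ ∑ _a ∈ A, 2 := sum_le_sum hAO
        _ = 6 := by rw [sum_const, hcardA, smul_eq_mul]
    have hge : ∀ o ∈ O, 1 ≤ (A.filter (fun a => G.Adj a o)).card := by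
      intro o ho
      obtain ⟨a, ha, hadj⟩ := hone o ho
      exact card_pos.mpr ⟨a, mem_filter.mpr ⟨ha, hadj⟩⟩
    intro o ho
    by_contra hne
    have h2 : 2 ≤ (A.filter (fun a => G.Adj a o)).card := by
      have := hge o ho; omega
    have : ∑ o ∈ O, (1:ℕ) < ∑ o ∈ O, (A.filter (fun a => G.Adj a o)).card :=
      Finset.sum_lt_sum hge ⟨o, ho, by omega⟩
    rw [sum_const, hcardO, smul_eq_mul] at this
    omega
  -- each o has exactly two neighbors in O
  have htwo : ∀ o ∈ O, (O.filter (G.Adj o)).card = 2 := by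
    intro o ho
    have hsplit : G.neighborFinset o = (A.filter (fun a => G.Adj a o)) ∪ (O.filter (G.Adj o)) := by
      apply Finset.ext
      intro w
      simp only [mem_union, mem_filter, SimpleGraph.mem_neighborFinset]
      constructor
      · intro hw
        by_cases hwA : w ∈ A
        · exact Or.inl ⟨hwA, G.adj_symm hw⟩
        · refine Or.inr ⟨hmemO.mpr ⟨?_, ?_⟩, hw⟩
          · rintro rfl; exact (hmemO.mp ho).2 (G.adj_symm hw)
          · intro h; exact hwA (by simpa [hA] using h)
      · rintro (⟨_, h⟩ | ⟨_, h⟩)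
        · exact G.adj_symm h
        · exact h
    have hdisj : Disjoint (A.filter (fun a => G.Adj a o)) (O.filter (G.Adj o)) := by
      apply Finset.disjoint_left.mpr
      intro w hw1 hw2
      have : w ∈ CN G u := hAsub (mem_filter.mp hw1).1
      have : w ∉ O → False := fun h => h (mem_filter.mp hw2).1
      exact this (by rw [hO]; simp [‹w ∈ CN G u›])
    have := hdeg o
    rw [hsplit, card_union_of_disjoint hdisj, honeeq o ho] at this
    omega
  -- pick x
  have hOne : O.Nonempty := card_pos.mp (by omega)
  obtain ⟨x, hx⟩ := hOne
  set P := O.filter (G.Adj x) with hP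
  have hcardP : P.card = 2 := htwo x hx
  have hxP : x ∉ P := by simp [hP]
  set R := O \ insert x P with hR
  have hinsXP : insert x P ⊆ O := by
    intro w hw
    rcases mem_insert.mp hw with rfl | hw
    · exact hx
    · exact (mem_filter.mp hw).1
  have hcardR : R.card = 3 := by
    rw [hR, card_sdiff_of_subset hinsXP, hcardO, card_insert_of_notMem hxP, hcardP]
  -- p in P has at most one R neighbor
  have hPR : ∀ p ∈ P, (R.filter (G.Adj p)).card ≤ 1 := by
    intro p hp
    have hpO : p ∈ O := (mem_filter.mp hp).1
    have hxmem : x ∈ O.filter (G.Adj p) := mem_filter.mpr ⟨hx, G.adj_symm (mem_filter.mp hp).2⟩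
    have hsub : R.filter (G.Adj p) ⊆ (O.filter (G.Adj p)).erase x := by
      intro w hw
      rw [mem_filter] at hw
      rw [mem_erase, mem_filter]
      have hwR := hw.1
      refine ⟨?_, (mem_sdiff.mp hwR).1, hw.2⟩
      rintro rfl
      exact (mem_sdiff.mp hwR).2 (mem_insert_self _ _)
    calc (R.filter (G.Adj p)).card ≤ ((O.filter (G.Adj p)).erase x).card := card_le_card hsub
      _ = 1 := by rw [card_erase_of_mem hxmem, htwo p hpO]
  -- r in R: |R-nbrs| + |P-nbrs| >= 2
  have hRlow : ∀ r ∈ R, 2 ≤ (R.filter (G.Adj r)).card + (P.filter (G.Adj r)).card := by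
    intro r hr
    have hrO : r ∈ O := (mem_sdiff.mp hr).1
    have hnx : ¬ G.Adj r x := by
      intro h
      exact (mem_sdiff.mp hr).2 (mem_insert.mpr (Or.inr (mem_filter.mpr ⟨hrO, G.adj_symm h⟩)))
    have hsub : O.filter (G.Adj r) ⊆ (R.filter (G.Adj r)) ∪ (P.filter (G.Adj r)) := by
      intro w hw
      rw [mem_filter] at hw
      obtain ⟨hwO, hwadj⟩ := hw
      by_cases hwP : w ∈ P
      · exact mem_union.mpr (Or.inr (mem_filter.mpr ⟨hwP, hwadj⟩))
      · have hwx : w ≠ x := by rintro rfl; exact hnx hwadj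
        have : w ∈ R := mem_sdiff.mpr ⟨hwO, by simp [hwx, hwP]⟩
        exact mem_union.mpr (Or.inl (mem_filter.mpr ⟨this, hwadj⟩))
    calc (2:ℕ) = (O.filter (G.Adj r)).card := (htwo r hrO).symm
      _ ≤ ((R.filter (G.Adj r)) ∪ (P.filter (G.Adj r))).card := card_le_card hsub
      _ ≤ _ := card_union_le _ _
  -- sum of P-neighbors over R is ≤ 2
  have hsumPR : ∑ r ∈ R, (P.filter (G.Adj r)).card ≤ 2 := by
    have : ∑ r ∈ R, (P.filter (G.Adj r)).card = ∑ p ∈ P, (R.filter (G.Adj p)).card := by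
      rw [doubleCount G R P]
      apply Finset.sum_congr rfl
      intro p _
      apply Finset.card_bij (fun w _ => w) <;> simp (config := {contextual := true}) [G.adj_comm]
    rw [this]
    calc ∑ p ∈ P, (R.filter (G.Adj p)).card ≤ ∑ _p ∈ P, 1 := sum_le_sum hPR
      _ = 2 := by rw [sum_const, hcardP, smul_eq_mul]
  have hsumRR : 4 ≤ ∑ r ∈ R, (R.filter (G.Adj r)).card := by
    have h6 : 6 ≤ ∑ r ∈ R, ((R.filter (G.Adj r)).card + (P.filter (G.Adj r)).card) := by
      calc (6:ℕ) = ∑ _r ∈ R, 2 := by rw [sum_const, hcardR, smul_eq_mul]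
        _ ≤ _ := sum_le_sum hRlow
    rw [sum_add_distrib] at h6
    omega
  have hexr : ∃ r ∈ R, 2 ≤ (R.filter (G.Adj r)).card := by
    by_contra h
    push_neg at h
    have : ∑ r ∈ R, (R.filter (G.Adj r)).card ≤ ∑ _r ∈ R, 1 :=
      sum_le_sum (fun r hr => by have := h r hr; omega)
    rw [sum_const, hcardR, smul_eq_mul] at this
    omega
  obtain ⟨r, hrR, hr2⟩ := hexr
  have hrdom : ∀ w ∈ R, w ≠ r → G.Adj r w := by
    have hsub : R.filter (G.Adj r) ⊆ R.erase r := by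
      intro w hw
      rw [mem_filter] at hw
      exact mem_erase.mpr ⟨fun h => G.loopless.irrefl r (h ▸ hw.2), hw.1⟩
    have hcarde : (R.erase r).card = 2 := by rw [card_erase_of_mem hrR, hcardR]
    have heq : R.filter (G.Adj r) = R.erase r :=
      Finset.eq_of_subset_of_card_le hsub (by omega)
    intro w hw hne
    have : w ∈ R.filter (G.Adj r) := heq ▸ mem_erase.mpr ⟨hne, hw⟩
    exact (mem_filter.mp this).2
  -- the dominating set
  refine ⟨{u, x, r}, ?_, ?_⟩
  · intro v hv
    simp only [mem_insert, mem_singleton, not_or] at hv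
    obtain ⟨hvu, hvx, hvr⟩ := hv
    by_cases hvO : v ∈ O
    · have hvO2 : v ∈ insert x P ∪ R := by
        rw [hR]
        by_cases h : v ∈ insert x P
        · exact mem_union.mpr (Or.inl h)
        · exact mem_union.mpr (Or.inr (mem_sdiff.mpr ⟨hvO, h⟩))
      rcases mem_union.mp hvO2 with h | h
      · rcases mem_insert.mp h with rfl | h
        · exact absurd rfl hvx
        · exact ⟨x, by simp, (mem_filter.mp h).2⟩
      · exact ⟨r, by simp, hrdom v h hvr⟩
    · have : v ∈ CN G u := by
        by_contra hc
        exact hvO (mem_sdiff.mpr ⟨mem_univ v, hc⟩)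
      rcases (mem_CN G).mp this with rfl | h
      · exact absurd rfl hvu
      · exact ⟨u, by simp, h⟩
  · have hxr : x ≠ r := by
      rintro rfl
      exact (mem_sdiff.mp hrR).2 (mem_insert_self _ _)
    have hux : u ≠ x := fun h => huO (h ▸ hx)
    have hur : u ≠ r := fun h => huO (h ▸ (mem_sdiff.mp hrR).1)
    rw [card_insert_of_notMem (by simp [hux, hur]), card_insert_of_notMem (by simp [hxr])]
    rfl

lemma dom_card_ge (hreg : G.IsRegularOfDegree 3) (hcard : Fintype.card V = 10)
    {S : Finset V} (hS : IsDomSet G S) : 3 ≤ S.card := by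
  have hcover : Finset.univ ⊆ S.biUnion (CN G) := by
    intro w _
    by_cases hw : w ∈ S
    · exact mem_biUnion.mpr ⟨w, hw, (mem_CN G).mpr (Or.inl rfl)⟩
    · obtain ⟨s, hs, hadj⟩ := hS w hw
      exact mem_biUnion.mpr ⟨s, hs, (mem_CN G).mpr (Or.inr hadj)⟩
  have h1 : (10 : ℕ) ≤ (S.biUnion (CN G)).card := by
    calc (10 : ℕ) = (Finset.univ : Finset V).card := by rw [card_univ, hcard]
      _ ≤ _ := card_le_card hcover
  have h2 : (S.biUnion (CN G)).card ≤ ∑ s ∈ S, (CN G s).card := card_biUnion_le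
  have h3 : ∑ s ∈ S, (CN G s).card = 4 * S.card := by
    rw [sum_congr rfl (fun s _ => card_CN G hreg s), sum_const, smul_eq_mul, mul_comm]
  omega

lemma exists_dom3 (hreg : G.IsRegularOfDegree 3) (hcard : Fintype.card V = 10) :
    ∃ S : Finset V, IsDomSet G S ∧ S.card = 3 := by
  by_cases h : ∀ a b : V, ((CN G a) ∩ (CN G b)).Nonempty
  · exact caseB G hreg hcard h
  · push_neg at h
    obtain ⟨a, b, hab⟩ := h
    exact caseA G hreg hcard (by
      rw [Finset.disjoint_iff_inter_eq_empty]
      exact hab)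

end CubicDom

theorem domNumber_cubic_order_ten {V : Type*} [Fintype V] (G : SimpleGraph V) [DecidableRel G.Adj]
    (hconn : G.Connected) (hreg : G.IsRegularOfDegree 3)
    (hcard : Fintype.card V = 10) :
    domNumber G = 3 := by
  classical
  obtain ⟨S, hS, hS3⟩ := CubicDom.exists_dom3 G hreg hcard
  have h3mem : 3 ∈ {i : ℕ | ∃ S : Finset V, IsDomSet G S ∧ S.card = i} := ⟨S, hS, hS3⟩
  apply le_antisymm
  · exact Nat.sInf_le h3mem
  · apply le_csInf ⟨3, h3mem⟩
    rintro i ⟨T, hT, rfl⟩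
    exact CubicDom.dom_card_ge G hreg hcard hT
end

section
/- The domination polynomial of the Petersen graph P is D(P,x) = x^10 + C(10,9)x^9 + C(10,8)x^8 + C(10,7)x^7 + (C(10,6) − 10)x^6 + (C(10,5) − 60)x^5 + 75x^4 + 10x^3; equivalently, d(P,3)=10, d(P,4)=75, d(P,5)=192, d(P,6)=200, d(P,7)=120, d(P,8)=45, d(P,9)=10, d(P,10)=1, and d(P,i)=0 for i ≤ 2. -/
/-- The Petersen graph: vertices are the 2-element subsets of a 5-element set,
with two vertices adjacent iff the corresponding subsets are disjoint. -/
def petersen : SimpleGraph {s : Finset (Fin 5) // s.card = 2} where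
  Adj a b := Disjoint a.1 b.1
  symm := ⟨fun a b h => h.symm⟩
  loopless := ⟨fun a h => by
    have h' : Disjoint a.1 a.1 := h
    rw [disjoint_self] at h'
    have h2 := a.2
    rw [h'] at h2
    simp at h2⟩

instance : DecidableRel petersen.Adj := fun a b =>
  inferInstanceAs (Decidable (Disjoint a.1 b.1))

instance {V : Type*} (G : SimpleGraph V) [Fintype V] [DecidableEq V] [DecidableRel G.Adj] :
    DecidablePred (IsDomSet G) := fun S =>
  inferInstanceAs (Decidable (∀ v, v ∉ S → ∃ u ∈ S, G.Adj u v))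

/-- The list of 2-element subsets of `Fin 5`. -/
def pr : Fin 10 → Finset (Fin 5) :=
  ![{0,1},{0,2},{0,3},{0,4},{1,2},{1,3},{1,4},{2,3},{2,4},{3,4}]

/-- Adjacency matrix of the Petersen graph under the enumeration `pr`. -/
def adjm : Fin 10 → Fin 10 → Bool :=
  ![![false,false,false,false,false,false,false,true ,true ,true ],
    ![false,false,false,false,false,true ,true ,false,false,true ],
    ![false,false,false,false,true ,false,true ,false,true ,false],
    ![false,false,false,false,true ,true ,false,true ,false,false],
    ![false,false,true ,true ,false,false,false,false,false,true ],
    ![false,true ,false,true ,false,false,false,false,true ,false],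
    ![false,true ,true ,false,false,false,false,true ,false,false],
    ![true ,false,false,true ,false,false,true ,false,false,false],
    ![true ,false,true ,false,false,true ,false,false,false,false],
    ![true ,true ,false,false,true ,false,false,false,false,false]]

/-- The Petersen graph realized on `Fin 10`. -/
def pet10 : SimpleGraph (Fin 10) where
  Adj a b := adjm a b
  symm := ⟨fun a b h => by revert h; fin_cases a <;> fin_cases b <;> decide⟩
  loopless := ⟨fun a h => by revert h; fin_cases a <;> decide⟩

instance : DecidableRel pet10.Adj := fun a b =>
  inferInstanceAs (Decidable (adjm a b = true))

/-- The vertex equivalence between `Fin 10` and the vertices of `petersen`. -/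
noncomputable def eV : Fin 10 ≃ {s : Finset (Fin 5) // s.card = 2} :=
  Equiv.ofBijective (fun i => ⟨pr i, by fin_cases i <;> decide⟩)
    ((Fintype.bijective_iff_injective_and_card _).mpr ⟨by decide, by decide⟩)

lemma eV_adj (a b : Fin 10) : pet10.Adj a b ↔ petersen.Adj (eV a) (eV b) := by
  show adjm a b = true ↔ Disjoint (pr a) (pr b)
  fin_cases a <;> fin_cases b <;> decide

lemma isDomSet_map {V W : Type*} (G : SimpleGraph V) (G' : SimpleGraph W) (e : V ≃ W)
    (h : ∀ a b, G.Adj a b ↔ G'.Adj (e a) (e b)) (S : Finset V) :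
    IsDomSet G' (S.map e.toEmbedding) ↔ IsDomSet G S := by
  constructor
  · intro hd v hv
    obtain ⟨u, hu, hadj⟩ := hd (e v) (by simp [Finset.mem_map_equiv, hv])
    rw [Finset.mem_map_equiv] at hu
    exact ⟨e.symm u, hu, (h _ _).mpr (by simpa using hadj)⟩
  · intro hd w hw
    obtain ⟨u, hu, hadj⟩ := hd (e.symm w) (by simpa [Finset.mem_map_equiv] using hw)
    exact ⟨e u, by simp [Finset.mem_map_equiv, hu], by simpa using (h _ _).mp hadj⟩

lemma domCount_map {V W : Type*} (G : SimpleGraph V) (G' : SimpleGraph W) (e : V ≃ W)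
    (h : ∀ a b, G.Adj a b ↔ G'.Adj (e a) (e b)) (i : ℕ) : domCount G i = domCount G' i := by
  unfold domCount
  have himg : {T : Finset W | IsDomSet G' T ∧ T.card = i}
      = e.finsetCongr '' {S : Finset V | IsDomSet G S ∧ S.card = i} := by
    ext T
    rw [Set.mem_image_equiv]
    simp only [Set.mem_setOf_eq, Equiv.finsetCongr_symm, Equiv.finsetCongr_apply,
      Finset.card_map]
    have hTT : (T.map e.symm.toEmbedding).map e.toEmbedding = T := by
      ext a; simp [Finset.mem_map_equiv]
    constructor
    · rintro ⟨hd, hc⟩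
      refine ⟨?_, hc⟩
      rw [← isDomSet_map G G' e h (T.map e.symm.toEmbedding), hTT]
      exact hd
    · rintro ⟨hd, hc⟩
      refine ⟨?_, hc⟩
      rw [← hTT]
      exact (isDomSet_map G G' e h _).mpr hd
  rw [himg, Set.ncard_image_of_injective _ (Equiv.injective _)]

lemma key10 (i : ℕ) : domCount petersen i =
    (Finset.univ.filter (fun S : Finset (Fin 10) => IsDomSet pet10 S ∧ S.card = i)).card := by
  rw [← domCount_map pet10 petersen eV eV_adj, domCount, ← Set.ncard_coe_finset]
  congr 1
  ext S
  simp

set_option maxHeartbeats 4000000 in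
set_option maxRecDepth 40000 in
theorem petersen_domination_polynomial :
    domCount petersen 3 = 10 ∧
    domCount petersen 4 = 75 ∧
    domCount petersen 5 = Nat.choose 10 5 - 60 ∧
    domCount petersen 6 = Nat.choose 10 6 - 10 ∧
    domCount petersen 7 = Nat.choose 10 7 ∧
    domCount petersen 8 = Nat.choose 10 8 ∧
    domCount petersen 9 = Nat.choose 10 9 ∧
    domCount petersen 10 = 1 ∧
    ∀ i : ℕ, i ≤ 2 → domCount petersen i = 0 := by
  refine ⟨?_, ?_, ?_, ?_, ?_, ?_, ?_, ?_, ?_⟩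
  · rw [key10]; decide
  · rw [key10]; decide
  · rw [key10]; decide
  · rw [key10]; decide
  · rw [key10]; decide
  · rw [key10]; decide
  · rw [key10]; decide
  · rw [key10]; decide
  · intro i hi
    interval_cases i
    · rw [key10]; decide
    · rw [key10]; decide
    · rw [key10]; decide
end
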